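/- There exists C > 0 such that for all sufficiently small ε > 0 and every u in the weighted Sobolev space H¹_ε, u is continuous on (-∞, ε^{-2/3}) and ‖u‖_{L^∞(-∞,ε^{-2/3})} ≤ C ‖u‖_{H¹_ε}. -/

import Mathlib

open Set MeasureTheory

private lemma amgm_aux (s M Wmin W p q : ℝ) (hs : 0 < s) (hM1 : 1 ≤ M) (hM2 : 1/(4*Wmin) ≤ M)
    (hWmin : 0 < Wmin) (hW : Wmin ≤ W) :
    |2 * p * q| ≤ M * (4 * s * q^2 + s⁻¹ * (W * p^2)) := by
  have h4 : (1:ℝ) ≤ M * (4*Wmin) := by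
    rw [div_le_iff₀ (by positivity)] at hM2; linarith
  have hss : s * s⁻¹ = 1 := mul_inv_cancel₀ hs.ne'
  have habs : |2 * p * q| = 2 * (|p| * |q|) := by
    rw [mul_assoc, abs_mul, abs_mul, abs_two]
  rw [habs]
  have h1 : 2 * (|p| * |q|) ≤ 4 * s * q^2 + (1/4) * s⁻¹ * p^2 := by
    nlinarith [sq_nonneg (4*s*|q| - |p|), sq_abs p, sq_abs q, hs, hss,
      mul_pos hs hs, abs_nonneg p, abs_nonneg q]
  have h2 : (1/4) * s⁻¹ * p^2 ≤ M * (s⁻¹ * (W * p^2)) := by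
    have hsi : 0 ≤ s⁻¹ := inv_nonneg.mpr hs.le
    nlinarith [mul_nonneg hsi (sq_nonneg p), sq_nonneg p,
      mul_le_mul_of_nonneg_left hW (le_of_lt (lt_of_lt_of_le one_pos hM1))]
  nlinarith [sq_nonneg q, mul_nonneg (mul_nonneg (by norm_num : (0:ℝ) ≤ 4) hs.le) (sq_nonneg q)]

private lemma weight_rw_aux (a Q P : ℝ) (ha : 0 < a) :
    a ^ (-(1:ℝ)/2) * (4 * a * Q + P) = 4 * Real.sqrt a * Q + (Real.sqrt a)⁻¹ * P := by
  have h1 : a ^ (-(1:ℝ)/2) = (Real.sqrt a)⁻¹ := by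
    rw [show (-(1:ℝ)/2) = -(1/2) by ring, Real.rpow_neg ha.le, Real.sqrt_eq_rpow]
  have hsp : 0 < Real.sqrt a := Real.sqrt_pos.mpr ha
  rw [h1]
  field_simp
  linear_combination (-4*Q) * (Real.sq_sqrt ha.le)

private lemma lower_bd_aux (e y W Wmin : ℝ) (he : 0 < e) (he1 : e ≤ 1) (hey : e * y < 1)
    (hWmin : 0 < Wmin) (hW : Wmin ≤ W) (hWy : -y ≤ W) :
    min Wmin 1 / 2 ≤ (Real.sqrt (1 - e * y))⁻¹ * W := by
  set a := 1 - e * y with ha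
  have hapos : 0 < a := by simp [ha]; linarith
  have hsp : 0 < Real.sqrt a := Real.sqrt_pos.mpr hapos
  rw [show (Real.sqrt a)⁻¹ * W = W / Real.sqrt a by ring, le_div_iff₀ hsp]
  rcases le_or_gt (-1) y with hy | hy
  · have ha2 : a ≤ 2 := by
      rcases le_or_gt 0 y with h0 | h0
      · have : 0 ≤ e * y := mul_nonneg he.le h0
        simp only [ha]; linarith
      · have : -(e*y) ≤ e := by nlinarith
        simp only [ha]; linarith
    have : Real.sqrt a ≤ 2 := by
      have := Real.sqrt_le_sqrt ha2
      have h4 : Real.sqrt 2 ≤ 2 := by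
        nlinarith [Real.sq_sqrt (by norm_num : (0:ℝ) ≤ 2), Real.sqrt_nonneg 2]
      linarith
    calc min Wmin 1 / 2 * Real.sqrt a ≤ (Wmin/2) * 2 := by
          apply mul_le_mul (by have := min_le_left Wmin 1; linarith) this hsp.le (by positivity)
      _ ≤ W := by linarith
  · have hyW : 1 ≤ W := by linarith
    have ha2 : a ≤ -2 * y := by
      have : -(e * y) ≤ -y := by nlinarith
      simp only [ha]; nlinarith
    have hs2 : Real.sqrt a ≤ -2 * y := by
      calc Real.sqrt a ≤ Real.sqrt (-2*y) := Real.sqrt_le_sqrt ha2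
        _ ≤ -2 * y := by
            have h1 : (1:ℝ) ≤ -2*y := by linarith
            nlinarith [Real.sq_sqrt (by linarith : (0:ℝ) ≤ -2*y), Real.sqrt_nonneg (-2*y)]
    have hmin : min Wmin 1 / 2 ≤ 1/2 := by have := min_le_right Wmin 1; linarith
    calc min Wmin 1 / 2 * Real.sqrt a ≤ (1/2) * (-2*y) := by
          apply mul_le_mul hmin hs2 hsp.le (by norm_num)
      _ = -y := by ring
      _ ≤ W := hWy

/-- Lemma 4.2: uniform Sobolev embedding `H¹_ε ↪ L^∞(-∞, ε^{-2/3})`: there exists `C > 0`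
such that for all sufficiently small `ε > 0`, every `u ∈ H¹_ε` is continuous on
`(-∞, ε^{-2/3})` and satisfies `‖u‖_{L^∞} ≤ C ‖u‖_{H¹_ε}`. -/
theorem sobolev_embedding_H1eps (ν₀ : ℝ → ℝ) (Wmin : ℝ) (hWmin : 0 < Wmin)
    (hW : ∀ y : ℝ, Wmin ≤ 3 * ν₀ y ^ 2 - y) :
    ∃ C : ℝ, 0 < C ∧ ∃ ε₀ : ℝ, 0 < ε₀ ∧ ∀ ε : ℝ, 0 < ε → ε < ε₀ →
      ∀ u u' : ℝ → ℝ,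
        (∀ y ∈ Iio (ε ^ (-(2:ℝ)/3)), HasDerivAt u (u' y) y) →
        IntegrableOn (fun y => (1 - ε ^ ((2:ℝ)/3) * y) ^ (-(1:ℝ)/2) *
          (4 * (1 - ε ^ ((2:ℝ)/3) * y) * u' y ^ 2 + (3 * ν₀ y ^ 2 - y) * u y ^ 2))
          (Iio (ε ^ (-(2:ℝ)/3))) →
        ContinuousOn u (Iio (ε ^ (-(2:ℝ)/3))) ∧
        ∀ y ∈ Iio (ε ^ (-(2:ℝ)/3)),
          |u y| ≤ C * Real.sqrt (∫ y in Iio (ε ^ (-(2:ℝ)/3)),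
            (1 - ε ^ ((2:ℝ)/3) * y) ^ (-(1:ℝ)/2) *
            (4 * (1 - ε ^ ((2:ℝ)/3) * y) * u' y ^ 2 + (3 * ν₀ y ^ 2 - y) * u y ^ 2)) := by
  set M : ℝ := max 1 (1/(4*Wmin)) with hM
  have hM1 : (1:ℝ) ≤ M := le_max_left _ _
  have hM2 : 1/(4*Wmin) ≤ M := le_max_right _ _
  have hMpos : 0 < M := lt_of_lt_of_le one_pos hM1
  refine ⟨Real.sqrt M, Real.sqrt_pos.mpr hMpos, 1, one_pos, ?_⟩
  intro ε hε hε1 u u' hderiv hint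
  set e : ℝ := ε ^ ((2:ℝ)/3) with hedef
  set L : ℝ := ε ^ (-(2:ℝ)/3) with hLdef
  set g : ℝ → ℝ := fun y => (1 - e * y) ^ (-(1:ℝ)/2) *
      (4 * (1 - e * y) * u' y ^ 2 + (3 * ν₀ y ^ 2 - y) * u y ^ 2) with hgdef
  have he : 0 < e := Real.rpow_pos_of_pos hε _
  have he1 : e ≤ 1 := Real.rpow_le_one hε.le hε1.le (by norm_num)
  have hLe : L = e⁻¹ := by
    rw [hLdef, hedef, show (-(2:ℝ)/3) = -(2/3) by ring, Real.rpow_neg hε.le]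
  have hey : ∀ y ∈ Iio L, e * y < 1 := by
    intro y hy
    have h1 : e * y < e * L := mul_lt_mul_of_pos_left hy he
    rwa [hLe, mul_inv_cancel₀ he.ne'] at h1
  have hapos : ∀ y ∈ Iio L, 0 < 1 - e * y := fun y hy => by linarith [hey y hy]
  -- nonnegativity of g
  have hgnn : ∀ y ∈ Iio L, 0 ≤ g y := by
    intro y hy
    have ha := hapos y hy
    have hWy := hW y
    apply mul_nonneg (Real.rpow_nonneg ha.le _)
    have h1 : 0 ≤ 4 * (1 - e*y) * u' y ^ 2 := by positivity
    nlinarith [sq_nonneg (u y)]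
  -- rewrite of g
  have hgrw : ∀ y ∈ Iio L, g y = 4 * Real.sqrt (1 - e*y) * u' y ^ 2 +
      (Real.sqrt (1 - e*y))⁻¹ * ((3 * ν₀ y ^ 2 - y) * u y ^ 2) :=
    fun y hy => weight_rw_aux _ _ _ (hapos y hy)
  -- continuity
  have hcont : ContinuousOn u (Iio L) :=
    fun y hy => (hderiv y hy).continuousAt.continuousWithinAt
  refine ⟨hcont, ?_⟩
  -- the integral
  set I : ℝ := ∫ y in Iio L, g y with hI
  have hInn : 0 ≤ I := setIntegral_nonneg measurableSet_Iio hgnn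
  -- pointwise bound |2 u u'| ≤ M g
  have hbound : ∀ y ∈ Iio L, |2 * u y * u' y| ≤ M * g y := by
    intro y hy
    rw [hgrw y hy]
    exact amgm_aux _ _ _ _ _ _ (Real.sqrt_pos.mpr (hapos y hy)) hM1 hM2 hWmin (hW y)
  -- measurability of F = 2 u u'
  set F : ℝ → ℝ := fun t => 2 * u t * u' t with hF
  have humeas : AEStronglyMeasurable u (volume.restrict (Iio L)) :=
    hcont.aestronglyMeasurable measurableSet_Iio
  have hu'meas : AEStronglyMeasurable u' (volume.restrict (Iio L)) := by
    apply (measurable_deriv u).aestronglyMeasurable.congr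
    filter_upwards [ae_restrict_mem measurableSet_Iio] with x hx
    exact ((hderiv x hx).deriv)
  have hFmeas : AEStronglyMeasurable F (volume.restrict (Iio L)) :=
    (humeas.const_mul 2).mul hu'meas
  -- integrability of F on Iio L
  have hFint : IntegrableOn F (Iio L) := by
    apply Integrable.mono' (hint.const_mul M) hFmeas
    filter_upwards [ae_restrict_mem measurableSet_Iio] with x hx
    exact hbound x hx
  -- integrability of u^2 on Iio L
  set c : ℝ := min Wmin 1 / 2 with hc
  have hcpos : 0 < c := by
    have := lt_min hWmin one_pos; positivity
  have hu2le : ∀ y ∈ Iio L, u y ^ 2 ≤ c⁻¹ * g y := by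
    intro y hy
    have hlow : c ≤ (Real.sqrt (1 - e*y))⁻¹ * (3 * ν₀ y ^ 2 - y) :=
      lower_bd_aux e y _ Wmin he he1 (hey y hy) hWmin (hW y) (by nlinarith [sq_nonneg (ν₀ y)])
    have h1 : c * u y ^ 2 ≤ g y := by
      rw [hgrw y hy]
      have h2 : c * u y ^ 2 ≤ (Real.sqrt (1 - e*y))⁻¹ * (3 * ν₀ y ^ 2 - y) * u y ^ 2 :=
        mul_le_mul_of_nonneg_right hlow (sq_nonneg _)
      have h3 : 0 ≤ 4 * Real.sqrt (1 - e*y) * u' y ^ 2 := by positivity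
      nlinarith
    have h4 := mul_le_mul_of_nonneg_left h1 (inv_nonneg.mpr hcpos.le)
    calc u y ^ 2 = c⁻¹ * (c * u y ^ 2) := by field_simp
      _ ≤ c⁻¹ * g y := h4
  have hu2int : IntegrableOn (fun y => u y ^ 2) (Iio L) := by
    apply Integrable.mono' (hint.const_mul c⁻¹)
      ((hcont.pow 2).aestronglyMeasurable measurableSet_Iio)
    filter_upwards [ae_restrict_mem measurableSet_Iio] with x hx
    rw [Real.norm_eq_abs, abs_of_nonneg (sq_nonneg _)]
    exact hu2le x hx
  -- small values of u^2 arbitrarily far left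
  have hsmall : ∀ δ : ℝ, 0 < δ → ∀ y₀ ∈ Iio L, ∃ t, t < y₀ ∧ u t ^ 2 < δ := by
    intro δ hδ y₀ hy₀
    by_contra hcon
    push_neg at hcon
    have hsub : Iio y₀ ⊆ Iio L := Iio_subset_Iio (le_of_lt hy₀)
    have hint2 : Integrable (fun y => u y ^ 2) (volume.restrict (Iio y₀)) :=
      hu2int.mono_set hsub
    have hmark := hint2.measure_ge_lt_top hδ
    have hsup : Iio y₀ ⊆ {a | δ ≤ u a ^ 2} := fun t ht => hcon t ht
    have h1 : (volume.restrict (Iio y₀)) (Iio y₀) ≤ (volume.restrict (Iio y₀)) {a | δ ≤ u a ^ 2} :=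
      measure_mono hsup
    rw [Measure.restrict_apply_self] at h1
    rw [Real.volume_Iio] at h1
    exact absurd (lt_of_le_of_lt h1 hmark) (lt_irrefl _)
  -- FTC bound
  intro y hy
  have key : ∀ t, t < y → u y ^ 2 ≤ u t ^ 2 + M * I := by
    intro t ht
    have hIccsub : Icc t y ⊆ Iio L := fun x hx => lt_of_le_of_lt hx.2 hy
    have hder2 : ∀ x ∈ uIcc t y, HasDerivAt (fun z => u z ^ 2) (F x) x := by
      intro x hx
      rw [uIcc_of_le ht.le] at hx
      have := (hderiv x (hIccsub hx)).fun_pow 2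
      refine this.congr_deriv ?_
      show _ = 2 * u x * u' x; push_cast; ring
    have hFii : IntervalIntegrable F volume t y := by
      apply IntegrableOn.intervalIntegrable
      rw [uIcc_of_le ht.le]
      exact hFint.mono_set hIccsub
    have heq := intervalIntegral.integral_eq_sub_of_hasDerivAt hder2 hFii
    have hIocsub : Ioc t y ⊆ Iio L := fun x hx => lt_of_le_of_lt hx.2 hy
    have h1 : ∫ x in t..y, F x = ∫ x in Ioc t y, F x := intervalIntegral.integral_of_le ht.le
    have h2 : ∫ x in Ioc t y, F x ≤ ∫ x in Ioc t y, M * g x := by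
      apply setIntegral_mono_on (hFint.mono_set hIocsub)
        (IntegrableOn.mono_set (hint.const_mul M) hIocsub) measurableSet_Ioc
      intro x hx
      exact le_trans (le_abs_self _) (hbound x (hIocsub hx))
    have h3 : ∫ x in Ioc t y, M * g x ≤ ∫ x in Iio L, M * g x := by
      apply setIntegral_mono_set (hint.const_mul M)
      · filter_upwards [ae_restrict_mem measurableSet_Iio] with x hx
        exact mul_nonneg hMpos.le (hgnn x hx)
      · exact HasSubset.Subset.eventuallyLE hIocsub
    have h4 : ∫ x in Iio L, M * g x = M * I := integral_const_mul M g
    have h5 : u y ^ 2 - u t ^ 2 ≤ M * I := by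
      rw [← heq, h1]; linarith
    linarith
  have hfin : u y ^ 2 ≤ M * I := by
    apply le_of_forall_pos_le_add
    intro δ hδ
    obtain ⟨t, ht, hut⟩ := hsmall δ hδ y hy
    have := key t ht
    linarith
  calc |u y| = Real.sqrt (u y ^ 2) := (Real.sqrt_sq_eq_abs _).symm
    _ ≤ Real.sqrt (M * I) := Real.sqrt_le_sqrt hfin
    _ = Real.sqrt M * Real.sqrt I := Real.sqrt_mul hMpos.le I
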